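/- For permutations u, v ∈ S_n, u ≤ v in the Bruhat order if and only if for all 1 ≤ j ≤ n and all t such that s_t is a right descent of u (i.e. u(t) > u(t+1)), one has |{r ∈ u([t]) : r < j}| ≥ |{r ∈ v([t]) : r < j}|. -/

import Mathlib

open Finset Polynomial

/-- The inversion number (Coxeter length) of a permutation of `ℕ`, counted on `{1, …, n}`. -/
def invNum (n : ℕ) (u : Equiv.Perm ℕ) : ℕ :=
  (((Finset.Icc 1 n) ×ˢ (Finset.Icc 1 n)).filter
    (fun p => p.1 < p.2 ∧ u p.2 < u p.1)).card

/-- `u` is a member of `S_n`: it fixes every point outside `{1, …, n}`. -/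
def IsPermOn (n : ℕ) (u : Equiv.Perm ℕ) : Prop :=
  ∀ m, m ∉ Finset.Icc 1 n → u m = m

/-- The adjacent transposition `s_i`, interchanging `i` and `i + 1`. -/
def sAdj (i : ℕ) : Equiv.Perm ℕ := Equiv.swap i (i + 1)

/-- The Bruhat order on `S_n`: `u ≤ v` iff `v` is obtained from `u` by successively
multiplying on the right by transpositions, increasing the length at each step. -/
def BruhatLE (n : ℕ) (u v : Equiv.Perm ℕ) : Prop :=
  Relation.ReflTransGen
    (fun a b => invNum n a < invNum n b ∧
      ∃ i j, 1 ≤ i ∧ i < j ∧ j ≤ n ∧ b = a * Equiv.swap i j) u v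

/-- `(S_n)^J`, the minimal coset representatives, where `J = S \ {s_e : e ∈ E}`. -/
def MinReps (n : ℕ) (E : Set ℕ) (u : Equiv.Perm ℕ) : Prop :=
  ∀ j, 1 ≤ j → j ≤ n - 1 → j ∉ E → invNum n u < invNum n (sAdj j * u)

/-- `|{r ∈ u⁻¹([m]) : r < j}|`, the number of positions `r < j` of `u` holding
an element of `{1, …, m}`. -/
def posLT (n m j : ℕ) (u : Equiv.Perm ℕ) : ℕ :=
  ((Finset.Icc 1 n).filter (fun r => r < j ∧ u r ∈ Finset.Icc 1 m)).card

/-- Deodhar's recursion with `x = q` for the parabolic `R`-polynomials of `S_n`,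
for `J = S \ {s_e : e ∈ E}`. -/
def IsRFamilyQ (n : ℕ) (E : Set ℕ)
    (R : Equiv.Perm ℕ → Equiv.Perm ℕ → Polynomial ℤ) : Prop :=
  (∀ u v, MinReps n E u → MinReps n E v → ¬ BruhatLE n u v → R u v = 0) ∧
  (∀ u, MinReps n E u → R u u = 1) ∧
  (∀ u v, MinReps n E u → MinReps n E v → BruhatLE n u v → u ≠ v →
    ∀ j, 1 ≤ j → j ≤ n - 1 → v (j + 1) < v j →
      ((u (j + 1) < u j → R u v = R (u * sAdj j) (v * sAdj j)) ∧
       (¬ u (j + 1) < u j → MinReps n E (u * sAdj j) →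
          R u v = X * R (u * sAdj j) (v * sAdj j) + (X - 1) * R u (v * sAdj j)) ∧
       (¬ u (j + 1) < u j → ¬ MinReps n E (u * sAdj j) →
          R u v = - R u (v * sAdj j))))



namespace BruhatAux


/-- count of positions `p ∈ [1,t]` with `w p < m`. -/
def K (w : Equiv.Perm ℕ) (m t : ℕ) : ℕ :=
  ((Finset.Icc 1 t).filter (fun p => w p < m)).card

lemma card_filter_split (P : ℕ → Prop) [DecidablePred P] {t0 t : ℕ} (h : t0 ≤ t) :
    ((Finset.Icc 1 t).filter P).card
      = ((Finset.Icc 1 t0).filter P).card + ((Finset.Ioc t0 t).filter P).card := by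
  rw [← Finset.card_union_of_disjoint, ← Finset.filter_union]
  · congr 2
    ext x
    simp only [Finset.mem_Icc, Finset.mem_union, Finset.mem_Ioc]
    omega
  · apply Finset.disjoint_filter_filter
    rw [Finset.disjoint_left]
    intro x hx hx'
    simp only [Finset.mem_Icc, Finset.mem_Ioc] at hx hx'
    omega

lemma K_mono_t (w : Equiv.Perm ℕ) (m : ℕ) {t t' : ℕ} (h : t ≤ t') : K w m t ≤ K w m t' := by
  apply Finset.card_le_card
  apply Finset.filter_subset_filter
  exact Finset.Icc_subset_Icc le_rfl h

lemma K_mono_m (w : Equiv.Perm ℕ) {m m' : ℕ} (h : m ≤ m') (t : ℕ) : K w m t ≤ K w m' t := by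
  apply Finset.card_le_card
  apply Finset.monotone_filter_right
  intro x hx
  omega

lemma K_le_add (w : Equiv.Perm ℕ) (m : ℕ) {t t' : ℕ} (h : t ≤ t') :
    K w m t' ≤ K w m t + (t' - t) := by
  simp only [K]
  rw [card_filter_split _ h]
  have : ((Finset.Ioc t t').filter (fun p => w p < m)).card ≤ t' - t := by
    calc _ ≤ (Finset.Ioc t t').card := Finset.card_filter_le _ _
    _ = t' - t := Nat.card_Ioc t t'
  omega

lemma K_zero (w : Equiv.Perm ℕ) (m : ℕ) : K w m 0 = 0 := by
  simp [K]

/-- split at a position i with `1 ≤ i ≤ t`. -/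
lemma K_split_at (w : Equiv.Perm ℕ) (m : ℕ) {i t : ℕ} (h1 : 1 ≤ i) (h2 : i ≤ t) :
    K w m t = ((Finset.Icc 1 (i-1)).filter (fun p => w p < m)).card
      + (if w i < m then 1 else 0)
      + ((Finset.Ioc i t).filter (fun p => w p < m)).card := by
  rw [K, card_filter_split _ h2, card_filter_split (t0 := i - 1) (t := i) _ (by omega)]
  have : Finset.Ioc (i-1) i = {i} := by ext x; simp [Finset.mem_Ioc]; omega
  rw [this, Finset.filter_singleton]
  split <;> simp






lemma mem_Icc_map {n : ℕ} {w : Equiv.Perm ℕ} (hw : IsPermOn n w) {p : ℕ}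
    (hp : p ∈ Finset.Icc 1 n) : w p ∈ Finset.Icc 1 n := by
  by_contra h
  have h2 : w (w p) = w p := hw _ h
  have h3 : w p = p := w.injective h2
  rw [h3] at h
  exact h hp

lemma isPermOn_inv {n : ℕ} {w : Equiv.Perm ℕ} (hw : IsPermOn n w) : IsPermOn n w⁻¹ := by
  intro m hm
  have := hw m hm
  calc w⁻¹ m = w⁻¹ (w m) := by rw [this]
  _ = m := Equiv.symm_apply_apply w m

lemma isPermOn_mul_swap {n : ℕ} {w : Equiv.Perm ℕ} (hw : IsPermOn n w) {i j : ℕ}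
    (hi : i ∈ Finset.Icc 1 n) (hj : j ∈ Finset.Icc 1 n) :
    IsPermOn n (w * Equiv.swap i j) := by
  intro m hm
  have h1 : m ≠ i := fun h => hm (h ▸ hi)
  have h2 : m ≠ j := fun h => hm (h ▸ hj)
  rw [Equiv.Perm.mul_apply, Equiv.swap_apply_of_ne_of_ne h1 h2, hw m hm]

/-- at t = n, the count only depends on m. -/
lemma K_at_n {n : ℕ} {w : Equiv.Perm ℕ} (hw : IsPermOn n w) (m : ℕ) :
    K w m n = ((Finset.Icc 1 n).filter (fun x => x < m)).card := by
  rw [K, ← Finset.card_image_of_injective _ w.injective]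
  congr 1
  ext x
  simp only [Finset.mem_image, Finset.mem_filter]
  constructor
  · rintro ⟨p, ⟨hp, hpm⟩, rfl⟩
    exact ⟨mem_Icc_map hw hp, hpm⟩
  · rintro ⟨hx, hxm⟩
    refine ⟨w⁻¹ x, ⟨mem_Icc_map (isPermOn_inv hw) hx, ?_⟩, Equiv.apply_symm_apply w x⟩
    rw [show w (w⁻¹ x) = x from Equiv.apply_symm_apply w x]; exact hxm

/-- for m > n all positions count. -/
lemma K_big {n : ℕ} {w : Equiv.Perm ℕ} (hw : IsPermOn n w) {m t : ℕ} (ht : t ≤ n)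
    (hm : n < m) : K w m t = t := by
  rw [K, Finset.filter_true_of_mem, Nat.card_Icc]
  · omega
  · intro p hp
    simp only [Finset.mem_Icc] at hp
    have : w p ∈ Finset.Icc 1 n := mem_Icc_map hw (by simp [Finset.mem_Icc]; omega)
    simp only [Finset.mem_Icc] at this
    omega

lemma exists_diff {n : ℕ} {u v : Equiv.Perm ℕ} (hu : IsPermOn n u) (hv : IsPermOn n v)
    (h : u ≠ v) : ∃ i, i ∈ Finset.Icc 1 n ∧ u i ≠ v i := by
  by_contra hc
  push_neg at hc
  apply h
  ext p
  by_cases hp : p ∈ Finset.Icc 1 n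
  · exact hc p hp
  · rw [hu p hp, hv p hp]




lemma invNum_lt_swap {n : ℕ} (c : Equiv.Perm ℕ) {i j : ℕ} (h1 : 1 ≤ i) (hij : i < j)
    (hjn : j ≤ n) (hc : c i < c j) : invNum n c < invNum n (c * Equiv.swap i j) := by
  have e1 : (c * Equiv.swap i j) i = c j := by
    rw [Equiv.Perm.mul_apply, Equiv.swap_apply_left]
  have e2 : (c * Equiv.swap i j) j = c i := by
    rw [Equiv.Perm.mul_apply, Equiv.swap_apply_right]
  have e3 : ∀ p, p ≠ i → p ≠ j → (c * Equiv.swap i j) p = c p := by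
    intro p hpi hpj
    rw [Equiv.Perm.mul_apply, Equiv.swap_apply_of_ne_of_ne hpi hpj]
  set S := (((Finset.Icc 1 n) ×ˢ (Finset.Icc 1 n)).filter
    (fun p => p.1 < p.2 ∧ c p.2 < c p.1)) with hS
  set T := (((Finset.Icc 1 n) ×ˢ (Finset.Icc 1 n)).filter
    (fun p => p.1 < p.2 ∧ (c * Equiv.swap i j) p.2 < (c * Equiv.swap i j) p.1)) with hT
  have hijT : (i, j) ∈ T := by
    rw [hT, Finset.mem_filter, Finset.mem_product]
    refine ⟨⟨?_, ?_⟩, hij, by rw [e1, e2]; exact hc⟩ <;> simp only [Finset.mem_Icc] <;> omega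
  have hmemT : ∀ x : ℕ × ℕ, (1 ≤ x.1 ∧ x.1 ≤ n) → (1 ≤ x.2 ∧ x.2 ≤ n) → x.1 < x.2 →
      (c * Equiv.swap i j) x.2 < (c * Equiv.swap i j) x.1 → x ∈ T := by
    intro x h1 h2 h3 h4
    rw [hT, Finset.mem_filter, Finset.mem_product]
    simp only [Finset.mem_Icc]
    exact ⟨⟨h1, h2⟩, h3, h4⟩
  have hmem : ∀ x ∈ S, (1 ≤ x.1 ∧ x.1 ≤ n) ∧ (1 ≤ x.2 ∧ x.2 ≤ n) ∧ x.1 < x.2 ∧ c x.2 < c x.1 := by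
    intro x hx
    rw [hS, Finset.mem_filter, Finset.mem_product] at hx
    simp only [Finset.mem_Icc] at hx
    tauto
  classical
  set φ : ℕ × ℕ → ℕ × ℕ := fun x =>
    if x.2 = i then (if c j < c x.1 then (x.1, i) else (x.1, j))
    else if x.1 = j then (if c x.2 < c i then (j, x.2) else (i, x.2))
    else x with hφ
  have key : S.card ≤ (T.erase (i, j)).card := by
    apply Finset.card_le_card_of_injOn φ
    · -- maps into T.erase (i,j)
      rintro ⟨p, q⟩ hx
      obtain ⟨hp, hq, hpq, hval⟩ := hmem _ hx
      simp only at hp hq hpq hval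
      rw [Finset.mem_coe, Finset.mem_erase]
      by_cases hqi : q = i
      · have hpi : p < i := hqi ▸ hpq
        have hvali : c i < c p := hqi ▸ hval
        by_cases h : c j < c p
        · have himg : φ (p, q) = (p, i) := by simp [hφ, hqi, h]
          rw [himg]
          refine ⟨by intro hcon; rw [Prod.mk.injEq] at hcon; omega,
            hmemT _ (by omega) (by omega) (by omega) ?_⟩
          rw [e1, e3 p (by omega) (by omega)]; exact h
        · have himg : φ (p, q) = (p, j) := by simp [hφ, hqi, h]
          rw [himg]
          refine ⟨by intro hcon; rw [Prod.mk.injEq] at hcon; omega,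
            hmemT _ (by omega) (by omega) (by omega) ?_⟩
          rw [e2, e3 p (by omega) (by omega)]; exact hvali
      · by_cases hpj : p = j
        · have hjq : j < q := hpj ▸ hpq
          have hvalj : c q < c j := hpj ▸ hval
          by_cases h : c q < c i
          · have himg : φ (p, q) = (j, q) := by simp [hφ, hqi, hpj, h]
            rw [himg]
            refine ⟨by intro hcon; rw [Prod.mk.injEq] at hcon; omega,
              hmemT _ (by omega) (by omega) (by omega) ?_⟩
            rw [e2, e3 q hqi (by omega)]; exact h
          · have himg : φ (p, q) = (i, q) := by simp [hφ, hqi, hpj, h]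
            rw [himg]
            refine ⟨by intro hcon; rw [Prod.mk.injEq] at hcon; omega,
              hmemT _ (by omega) (by omega) (by omega) ?_⟩
            rw [e1, e3 q hqi (by omega)]; exact hvalj
        · have himg : φ (p, q) = (p, q) := by simp [hφ, hqi, hpj]
          rw [himg]
          by_cases hpi : p = i
          · have hqj : q ≠ j := by
              intro hcon
              rw [hpi, hcon] at hval
              omega
            refine ⟨by intro hcon; rw [Prod.mk.injEq] at hcon; exact hqj hcon.2,
              hmemT _ (by omega) (by omega) (by omega) ?_⟩
            rw [hpi] at hval ⊢
            rw [e1, e3 q hqi hqj]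
            omega
          · refine ⟨by intro hcon; rw [Prod.mk.injEq] at hcon; exact hpi hcon.1,
              hmemT _ (by omega) (by omega) (by omega) ?_⟩
            by_cases hqj : q = j
            · rw [hqj] at hval ⊢
              rw [e2, e3 p hpi hpj]
              omega
            · rw [e3 q hqi hqj, e3 p hpi hpj]; exact hval
    · -- injective on S
      intro x hxS y hyS hab
      obtain ⟨hp, hq, hpq, hval⟩ := hmem _ hxS
      obtain ⟨hp', hq', hpq', hval'⟩ := hmem _ hyS
      obtain ⟨p, q⟩ := x
      obtain ⟨p', q'⟩ := y
      simp only at hp hq hpq hval hp' hq' hpq' hval'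
      simp only [hφ] at hab
      split_ifs at hab <;> simp only [Prod.mk.injEq] at hab ⊢
      all_goals try omega
      all_goals (obtain ⟨hab1, hab2⟩ := hab; subst hab1; subst hab2; omega)
  have h1T : (T.erase (i, j)).card = T.card - 1 := Finset.card_erase_of_mem hijT
  have h2T : 0 < T.card := Finset.card_pos.mpr ⟨_, hijT⟩
  have hScard : invNum n c = S.card := rfl
  have hTcard : invNum n (c * Equiv.swap i j) = T.card := rfl
  omega

lemma swap_lt_of_invNum_lt {n : ℕ} (a : Equiv.Perm ℕ) {i j : ℕ} (h1 : 1 ≤ i) (hij : i < j)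
    (hjn : j ≤ n) (h : invNum n a < invNum n (a * Equiv.swap i j)) : a i < a j := by
  rcases lt_trichotomy (a i) (a j) with hlt | heq | hgt
  · exact hlt
  · exact absurd (a.injective heq) (by omega)
  · exfalso
    have hb : (a * Equiv.swap i j) i < (a * Equiv.swap i j) j := by
      rw [Equiv.Perm.mul_apply, Equiv.Perm.mul_apply, Equiv.swap_apply_left,
        Equiv.swap_apply_right]
      exact hgt
    have := invNum_lt_swap (a * Equiv.swap i j) h1 hij hjn hb
    rw [mul_assoc, Equiv.swap_mul_self, mul_one] at this
    omega





lemma K_swap_le (a : Equiv.Perm ℕ) {i j : ℕ} (h1 : 1 ≤ i) (hij : i < j)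
    (hc : a i < a j) (m t : ℕ) : K (a * Equiv.swap i j) m t ≤ K a m t := by
  have e3 : ∀ p, p ≠ i → p ≠ j → (a * Equiv.swap i j) p = a p := fun p hpi hpj => by
    rw [Equiv.Perm.mul_apply, Equiv.swap_apply_of_ne_of_ne hpi hpj]
  rcases lt_or_ge t i with hti | hit
  · apply le_of_eq
    unfold K
    congr 1
    apply Finset.filter_congr
    intro p hp
    simp only [Finset.mem_Icc] at hp
    rw [e3 p (by omega) (by omega)]
  · rcases lt_or_ge t j with htj | hjt
    · -- i ≤ t < j : subset
      apply Finset.card_le_card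
      intro p hp
      simp only [Finset.mem_filter, Finset.mem_Icc] at hp ⊢
      obtain ⟨⟨hp1, hp2⟩, hp3⟩ := hp
      refine ⟨⟨hp1, hp2⟩, ?_⟩
      by_cases hpi : p = i
      · rw [hpi] at hp3 ⊢
        rw [Equiv.Perm.mul_apply, Equiv.swap_apply_left] at hp3
        omega
      · rw [e3 p hpi (by omega)] at hp3
        exact hp3
    · -- j ≤ t: injection via swap
      apply Finset.card_le_card_of_injOn (fun p => Equiv.swap i j p)
      · intro p hp
        simp only [Finset.mem_coe, Finset.mem_filter, Finset.mem_Icc] at hp ⊢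
        obtain ⟨⟨hp1, hp2⟩, hp3⟩ := hp
        rw [Equiv.Perm.mul_apply] at hp3
        refine ⟨?_, hp3⟩
        by_cases hpi : p = i
        · rw [hpi, Equiv.swap_apply_left]; omega
        · by_cases hpj : p = j
          · rw [hpj, Equiv.swap_apply_right]; omega
          · rw [Equiv.swap_apply_of_ne_of_ne hpi hpj]; omega
      · intro x _ y _ hxy
        exact (Equiv.swap i j).injective hxy

lemma bruhatLE_K_le {n : ℕ} {u v : Equiv.Perm ℕ} (h : BruhatLE n u v) :
    ∀ m t, K v m t ≤ K u m t := by
  induction h with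
  | refl => exact fun m t => le_rfl
  | tail _hab hbc ih =>
    intro m t
    obtain ⟨hinv, i, j, hi, hij, hjn, rfl⟩ := hbc
    calc K _ m t ≤ K _ m t := K_swap_le _ hi hij (swap_lt_of_invNum_lt _ hi hij hjn hinv) m t
    _ ≤ K u m t := ih m t


lemma chain_lt {f : ℕ → ℕ} {x y : ℕ} (h : ∀ τ, x < τ → τ < y → f τ < f (τ + 1)) :
    ∀ p q, x < p → p < q → q ≤ y → f p < f q := by
  have main : ∀ d p q, q = p + 1 + d → x < p → q ≤ y → f p < f q := by
    intro d
    induction d with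
    | zero =>
      intro p q hq hxp hqy
      have : q = p + 1 := by omega
      subst this
      exact h p hxp (by omega)
    | succ d ih =>
      intro p q hq hxp hqy
      have hq' : q = (p + 1 + d) + 1 := by omega
      subst hq'
      exact lt_trans (ih p _ rfl hxp (by omega)) (h _ (by omega) (by omega))
  intro p q hxp hpq hqy
  exact main (q - p - 1) p q (by omega) hxp hqy

lemma local_sandwich {u v : Equiv.Perm ℕ} {m t0 t t' : ℕ} (h0t : t0 < t) (htt : t < t')
    (hrun : ∀ p q, t0 < p → p < q → q ≤ t' → u p < u q)
    (h0 : K v m t0 ≤ K u m t0) (h1 : K v m t' ≤ K u m t') : K v m t ≤ K u m t := by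
  classical
  by_cases hb : ∀ p, t < p → p ≤ t' → ¬ (u p < m)
  · have he : K u m t' = K u m t := by
      rw [K, card_filter_split (fun p => u p < m) (le_of_lt htt)]
      have hemp : ((Finset.Ioc t t').filter (fun p => u p < m)) = ∅ := by
        apply Finset.filter_eq_empty_iff.mpr
        intro p hp
        simp only [Finset.mem_Ioc] at hp
        exact hb p hp.1 hp.2
      rw [hemp]
      simp [K]
    calc K v m t ≤ K v m t' := K_mono_t v m (le_of_lt htt)
    _ ≤ K u m t' := h1
    _ = K u m t := he
  · push_neg at hb
    obtain ⟨p, hp1, hp2, hp3⟩ := hb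
    have hall : ∀ q, t0 < q → q ≤ t → u q < m := by
      intro q hq1 hq2
      have : u q < u p := hrun q p hq1 (by omega) hp2
      omega
    have he : K u m t = K u m t0 + (t - t0) := by
      rw [K, card_filter_split (fun p => u p < m) (le_of_lt h0t)]
      have hful : ((Finset.Ioc t0 t).filter (fun p => u p < m)) = Finset.Ioc t0 t := by
        apply Finset.filter_true_of_mem
        intro q hq
        simp only [Finset.mem_Ioc] at hq
        exact hall q hq.1 hq.2
      rw [hful, Nat.card_Ioc]
      rfl
    calc K v m t ≤ K v m t0 + (t - t0) := K_le_add v m (le_of_lt h0t)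
    _ ≤ K u m t0 + (t - t0) := by omega
    _ = K u m t := he.symm

lemma refine_per_m {n : ℕ} {u v : Equiv.Perm ℕ} (m : ℕ)
    (hN : K v m n ≤ K u m n)
    (hD : ∀ τ, 1 ≤ τ → τ ≤ n - 1 → u (τ + 1) < u τ → K v m τ ≤ K u m τ) :
    ∀ t, t ≤ n → K v m t ≤ K u m t := by
  classical
  intro t ht
  rcases Nat.eq_zero_or_pos t with rfl | ht0
  · simp [K_zero]
  rcases eq_or_ne t n with rfl | htn
  · exact hN
  by_cases hdesc : u (t + 1) < u t
  · exact hD t ht0 (by omega) hdesc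
  have hlt : t < n := by omega
  obtain ⟨t0, ht0def⟩ : ∃ x, x = Nat.findGreatest (fun τ => u (τ + 1) < u τ) t := ⟨_, rfl⟩
  have h0le : t0 ≤ t := ht0def ▸ Nat.findGreatest_le t
  have ht0D : t0 ≠ 0 → u (t0 + 1) < u t0 := fun h =>
    Nat.findGreatest_of_ne_zero (P := fun τ => u (τ + 1) < u τ) ht0def.symm h
  have h0lt : t0 < t := by
    rcases lt_or_eq_of_le h0le with h | h
    · exact h
    · exact absurd (h ▸ ht0D (by omega)) hdesc
  have hQ : ∃ τ, t < τ ∧ (τ = n ∨ u (τ + 1) < u τ) := ⟨n, hlt, Or.inl rfl⟩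
  obtain ⟨t', ht'def⟩ : ∃ x, x = Nat.find hQ := ⟨_, rfl⟩
  have hQt' : t < t' ∧ (t' = n ∨ u (t' + 1) < u t') := ht'def ▸ Nat.find_spec hQ
  have ht'le : t' ≤ n := ht'def ▸ Nat.find_min' hQ ⟨hlt, Or.inl rfl⟩
  have hrunstep : ∀ τ, t0 < τ → τ < t' → (fun x => u x) τ < (fun x => u x) (τ + 1) := by
    intro τ hτ0 hτ'
    simp only
    have hne : u τ ≠ u (τ + 1) := by
      intro h
      have := u.injective h
      omega
    have hnd : ¬ (u (τ + 1) < u τ) := by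
      rcases lt_or_ge τ t with h | h
      · exact Nat.findGreatest_is_greatest (P := fun τ => u (τ + 1) < u τ)
          (ht0def ▸ hτ0) (by omega)
      · rcases eq_or_lt_of_le h with rfl | h2
        · exact hdesc
        · intro hd
          exact Nat.find_min hQ (m := τ) (ht'def ▸ hτ') ⟨h2, Or.inr hd⟩
    omega
  have hrun : ∀ p q, t0 < p → p < q → q ≤ t' → u p < u q := chain_lt hrunstep
  have P0 : K v m t0 ≤ K u m t0 := by
    rcases Nat.eq_zero_or_pos t0 with rfl | h
    · simp [K_zero]
    · exact hD t0 h (by omega) (ht0D (by omega))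
  have P1 : K v m t' ≤ K u m t' := by
    rcases eq_or_ne t' n with rfl | h
    · exact hN
    · rcases hQt'.2 with h' | h'
      · exact absurd h' h
      · exact hD t' (by omega) (by omega) h'
  exact local_sandwich h0lt hQt'.1 hrun P0 P1

lemma K_zero_m (w : Equiv.Perm ℕ) (t : ℕ) : K w 0 t = 0 := by
  simp [K]

lemma crit_of_descents {n : ℕ} {u v : Equiv.Perm ℕ} (hu : IsPermOn n u) (hv : IsPermOn n v)
    (hD : ∀ m τ, 1 ≤ m → m ≤ n → 1 ≤ τ → τ ≤ n - 1 → u (τ + 1) < u τ → K v m τ ≤ K u m τ) :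
    ∀ m t, t ≤ n → K v m t ≤ K u m t := by
  intro m t ht
  rcases Nat.eq_zero_or_pos m with rfl | hm0
  · simp [K_zero_m]
  rcases le_or_gt m n with hmn | hmn
  · exact refine_per_m m (le_of_eq (by rw [K_at_n hv, K_at_n hu]))
      (fun τ h1 h2 h3 => hD m τ hm0 hmn h1 h2 h3) t ht
  · rw [K_big hv ht hmn, K_big hu ht hmn]

lemma K_swap_le_of_ge (a : Equiv.Perm ℕ) {i j m t : ℕ} (h1 : 1 ≤ i) (hij : i < j)
    (hjt : j ≤ t) : K (a * Equiv.swap i j) m t ≤ K a m t := by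
  apply Finset.card_le_card_of_injOn (fun p => Equiv.swap i j p)
  · intro p hp
    simp only [Finset.mem_coe, Finset.mem_filter, Finset.mem_Icc] at hp ⊢
    obtain ⟨⟨hp1, hp2⟩, hp3⟩ := hp
    rw [Equiv.Perm.mul_apply] at hp3
    refine ⟨?_, hp3⟩
    by_cases hpi : p = i
    · rw [hpi, Equiv.swap_apply_left]; omega
    · by_cases hpj : p = j
      · rw [hpj, Equiv.swap_apply_right]; omega
      · rw [Equiv.swap_apply_of_ne_of_ne hpi hpj]; omega
  · intro x _ y _ hxy
    exact (Equiv.swap i j).injective hxy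

lemma K_swap_eq_of_ge (a : Equiv.Perm ℕ) {i j m t : ℕ} (h1 : 1 ≤ i) (hij : i < j)
    (hjt : j ≤ t) : K (a * Equiv.swap i j) m t = K a m t := by
  apply le_antisymm (K_swap_le_of_ge a h1 hij hjt)
  have : a = (a * Equiv.swap i j) * Equiv.swap i j := by
    rw [mul_assoc, Equiv.swap_mul_self, mul_one]
  conv_lhs => rw [this]
  exact K_swap_le_of_ge _ h1 hij hjt

lemma K_swap_lt_of_lt (a : Equiv.Perm ℕ) {i j m t : ℕ} (hij : i < j) (hti : t < i) :
    K (a * Equiv.swap i j) m t = K a m t := by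
  unfold K
  congr 1
  apply Finset.filter_congr
  intro p hp
  simp only [Finset.mem_Icc] at hp
  rw [Equiv.Perm.mul_apply, Equiv.swap_apply_of_ne_of_ne (by omega) (by omega)]

lemma raising_step {n : ℕ} {u v : Equiv.Perm ℕ} (hu : IsPermOn n u) (hv : IsPermOn n v)
    (hcrit : ∀ m t, t ≤ n → K v m t ≤ K u m t) (hne : u ≠ v) :
    ∃ i j, 1 ≤ i ∧ i < j ∧ j ≤ n ∧ u i < u j ∧
      (∀ m t, t ≤ n → K v m t ≤ K (u * Equiv.swap i j) m t) := by
  classical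
  -- the first position where u and v differ
  set D := (Finset.Icc 1 n).filter (fun p => u p ≠ v p) with hDdef
  have hDne : D.Nonempty := by
    obtain ⟨i, hi1, hi2⟩ := exists_diff hu hv hne
    exact ⟨i, by rw [hDdef, Finset.mem_filter]; exact ⟨hi1, hi2⟩⟩
  set i := D.min' hDne with hidef
  have hiD : i ∈ D := D.min'_mem hDne
  rw [hDdef, Finset.mem_filter, Finset.mem_Icc] at hiD
  obtain ⟨⟨hi1, hin⟩, hiuv⟩ := hiD
  have hag : ∀ p, p < i → u p = v p := by
    intro p hp
    by_cases hp1 : 1 ≤ p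
    · by_contra hcon
      have hpD : p ∈ D := by
        rw [hDdef, Finset.mem_filter, Finset.mem_Icc]
        exact ⟨⟨hp1, by omega⟩, hcon⟩
      have := D.min'_le p hpD
      omega
    · have hp0 : p = 0 := by omega
      rw [hp0, hu 0 (by simp), hv 0 (by simp)]
  -- the common prefix counts agree
  have hpre : ∀ m, ((Finset.Icc 1 (i-1)).filter (fun p => v p < m)).card
      = ((Finset.Icc 1 (i-1)).filter (fun p => u p < m)).card := by
    intro m
    congr 1
    apply Finset.filter_congr
    intro p hp
    simp only [Finset.mem_Icc] at hp
    rw [hag p (by omega)]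
  -- u i < v i
  have hac : u i < v i := by
    have hvi : u i ≠ v i := hiuv
    have h := hcrit (u i) i (by omega)
    rw [K_split_at v (u i) hi1 le_rfl, K_split_at u (u i) hi1 le_rfl, hpre] at h
    simp only [Finset.Ioc_self, Finset.filter_empty, Finset.card_empty, lt_irrefl,
      if_false] at h
    by_contra hcon
    have : v i < u i := by omega
    rw [if_pos this] at h
    omega
  -- the witness position holding value v i
  have hp0 : u⁻¹ (v i) ∈ Finset.Icc 1 n := mem_Icc_map (isPermOn_inv hu)
    (mem_Icc_map hv (by simp only [Finset.mem_Icc]; omega))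
  set C := (Finset.Icc 1 n).filter (fun p => i < p ∧ u i < u p ∧ u p ≤ v i) with hCdef
  have hCne : C.Nonempty := by
    refine ⟨u⁻¹ (v i), ?_⟩
    rw [hCdef, Finset.mem_filter]
    have hap : u (u⁻¹ (v i)) = v i := Equiv.apply_symm_apply u (v i)
    refine ⟨hp0, ?_, by rw [hap]; omega, by rw [hap]⟩
    -- i < u⁻¹ (v i)
    rcases lt_trichotomy (u⁻¹ (v i)) i with h | h | h
    · exfalso
      have := hag _ h
      have h2 : v (u⁻¹ (v i)) = v i := by rw [← this, hap]
      have := v.injective h2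
      omega
    · exfalso
      rw [h] at hap
      omega
    · exact h
  set j := C.min' hCne with hjdef
  have hjC : j ∈ C := C.min'_mem hCne
  rw [hCdef, Finset.mem_filter, Finset.mem_Icc] at hjC
  obtain ⟨⟨hj1, hjn⟩, hij, hab, hbc⟩ := hjC
  have hdich : ∀ p, i < p → p < j → u p < u i ∨ v i < u p := by
    intro p hpi hpj
    have hnC : p ∉ C := by
      intro hcon
      have := C.min'_le p hcon
      omega
    rw [hCdef, Finset.mem_filter, Finset.mem_Icc] at hnC
    push_neg at hnC
    have hne' : u p ≠ u i := fun h => by have := u.injective h; omega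
    rcases lt_or_ge (u p) (u i) with h | h
    · exact Or.inl h
    · have h2 : u i < u p := by omega
      have := hnC ⟨by omega, by omega⟩ hpi h2
      exact Or.inr (by omega)
  refine ⟨i, j, hi1, hij, hjn, hab, ?_⟩
  intro m t ht
  rcases lt_or_ge t i with hti | hit
  · rw [K_swap_lt_of_lt u hij hti]
    exact hcrit m t ht
  rcases le_or_gt j t with hjt | htj
  · rw [K_swap_eq_of_ge u hi1 hij hjt]
    exact hcrit m t ht
  -- i ≤ t < j : the interesting case
  have hsplitu' : K (u * Equiv.swap i j) m t
      = ((Finset.Icc 1 (i-1)).filter (fun p => u p < m)).card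
        + (if u j < m then 1 else 0)
        + ((Finset.Ioc i t).filter (fun p => u p < m)).card := by
    rw [K_split_at _ m hi1 hit]
    congr 1
    · congr 1
      · congr 1
        apply Finset.filter_congr
        intro p hp
        simp only [Finset.mem_Icc] at hp
        rw [Equiv.Perm.mul_apply, Equiv.swap_apply_of_ne_of_ne (by omega) (by omega)]
      · rw [Equiv.Perm.mul_apply, Equiv.swap_apply_left]
    · congr 1
      apply Finset.filter_congr
      intro p hp
      simp only [Finset.mem_Ioc] at hp
      rw [Equiv.Perm.mul_apply, Equiv.swap_apply_of_ne_of_ne (by omega) (by omega)]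
  rcases le_or_gt m (u i) with hm1 | hm2
  · -- m ≤ u i : counts agree
    rw [hsplitu', if_neg (by omega)]
    have h := hcrit m t ht
    rw [K_split_at u m hi1 hit, if_neg (by omega)] at h
    exact h
  rcases lt_or_ge (u j) m with hm3 | hm4
  · -- u j < m : counts agree
    rw [hsplitu', if_pos hm3]
    have h := hcrit m t ht
    rw [K_split_at u m hi1 hit, if_pos (by omega)] at h
    exact h
  -- u i < m ≤ u j : strict case
  rw [hsplitu', if_neg (by omega)]
  rw [K_split_at v m hi1 hit, if_neg (by omega), hpre]
  -- now compare the Ioc parts using the criterion at v i + 1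
  have hkey := hcrit (v i + 1) t ht
  rw [K_split_at v (v i + 1) hi1 hit, K_split_at u (v i + 1) hi1 hit, hpre,
    if_pos (by omega), if_pos (by omega)] at hkey
  have hUeq : ((Finset.Ioc i t).filter (fun p => u p < v i + 1))
      = ((Finset.Ioc i t).filter (fun p => u p < m)) := by
    apply Finset.filter_congr
    intro p hp
    simp only [Finset.mem_Ioc] at hp
    rcases hdich p hp.1 (by omega) with h | h
    · constructor <;> intro <;> omega
    · constructor <;> intro <;> omega
  rw [hUeq] at hkey
  have hVle : ((Finset.Ioc i t).filter (fun p => v p < m)).card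
      ≤ ((Finset.Ioc i t).filter (fun p => v p < v i + 1)).card := by
    apply Finset.card_le_card
    apply Finset.monotone_filter_right
    intro p hp
    omega
  omega

lemma invNum_le_sq (n : ℕ) (w : Equiv.Perm ℕ) : invNum n w ≤ n * n := by
  calc invNum n w ≤ ((Finset.Icc 1 n) ×ˢ (Finset.Icc 1 n)).card := Finset.card_filter_le _ _
  _ = n * n := by simp [Nat.card_Icc]

lemma crit_to_bruhat {n : ℕ} {u v : Equiv.Perm ℕ} (hu : IsPermOn n u) (hv : IsPermOn n v)
    (hcrit : ∀ m t, t ≤ n → K v m t ≤ K u m t) : BruhatLE n u v := by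
  classical
  have main : ∀ k (u : Equiv.Perm ℕ), IsPermOn n u →
      (∀ m t, t ≤ n → K v m t ≤ K u m t) → n * n ≤ invNum n u + k → BruhatLE n u v := by
    intro k
    induction k with
    | zero =>
      intro u hu hcrit hk
      by_cases he : u = v
      · rw [he]; exact Relation.ReflTransGen.refl
      · obtain ⟨i, j, h1, hij, hjn, hlt, _⟩ := raising_step hu hv hcrit he
        have := invNum_lt_swap u h1 hij hjn hlt
        have := invNum_le_sq n (u * Equiv.swap i j)
        omega
    | succ k ih =>
      intro u hu hcrit hk
      by_cases he : u = v
      · rw [he]; exact Relation.ReflTransGen.refl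
      · obtain ⟨i, j, h1, hij, hjn, hlt, hcrit'⟩ := raising_step hu hv hcrit he
        have hinv := invNum_lt_swap u h1 hij hjn hlt
        have hbl : BruhatLE n (u * Equiv.swap i j) v := by
          apply ih _ (isPermOn_mul_swap hu (by simp only [Finset.mem_Icc]; omega)
            (by simp only [Finset.mem_Icc]; omega)) hcrit'
          omega
        exact Relation.ReflTransGen.head ⟨hinv, i, j, h1, hij, hjn, rfl⟩ hbl
  exact main (n * n) u hu hcrit (by omega)

lemma K_image (w : Equiv.Perm ℕ) (m t : ℕ) :
    (((Finset.Icc 1 t).image w).filter (fun r => r < m)).card = K w m t := by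
  classical
  rw [Finset.filter_image, K]
  exact Finset.card_image_of_injective _ w.injective

end BruhatAux


/-- Bruhat order via the counting criterion over right descents `s_t` of `u`. -/
theorem bruhat_iff_counts_descents (n : ℕ) (u v : Equiv.Perm ℕ)
    (hu : IsPermOn n u) (hv : IsPermOn n v) :
    BruhatLE n u v ↔
      ∀ j, 1 ≤ j → j ≤ n → ∀ t, 1 ≤ t → t ≤ n - 1 → u (t + 1) < u t →
        (((Finset.Icc 1 t).image v).filter (fun r => r < j)).card ≤
        (((Finset.Icc 1 t).image u).filter (fun r => r < j)).card := by
  constructor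
  · intro h j _ _ t _ _ _
    rw [BruhatAux.K_image, BruhatAux.K_image]
    exact BruhatAux.bruhatLE_K_le h j t
  · intro h
    apply BruhatAux.crit_to_bruhat hu hv
    apply BruhatAux.crit_of_descents hu hv
    intro m τ hm1 hmn hτ1 hτn hd
    have := h m hm1 hmn τ hτ1 hτn hd
    rw [BruhatAux.K_image, BruhatAux.K_image] at this
    exact this
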